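/- Let (𝐬, r(𝐬)) ∈ 𝒮 be connected with r(𝐬) = (1, r_1, r_2) (so k = 2 and r = r_2). Then 𝐬 is stable if and only if i_{r_1−1} ≤ i_{r_1+1} < j_{r_1+1} ≤ j_{r_1−1}. In particular, if 𝐬 is stable then i_{r_1−1} ≤ i_s ≤ j_s ≤ j_{r_1−1} for all r_1 + 1 ≤ s ≤ r_2. -/
import Mathlib


namespace AltSnakePaper

/-- `[i,j] ∈ 𝕀ₙ`: the interval condition `0 ≤ j - i ≤ n + 1`. -/
def InIn (n : ℕ) (i j : ℤ) : Prop := 0 ≤ j - i ∧ j - i ≤ (n : ℤ) + 1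

/-- The intervals `[i1,j1]` and `[i2,j2]` overlap. -/
def Overlap (i1 j1 i2 j2 : ℤ) : Prop :=
  (i1 < i2 ∧ i2 ≤ j1 ∧ j1 < j2) ∨ (i2 < i1 ∧ i1 ≤ j2 ∧ j2 < j1)

/-- The pair `([i1,j1],[i2,j2])` is connected. -/
def ConnPair (n : ℕ) (i1 j1 i2 j2 : ℤ) : Prop :=
  Overlap i1 j1 i2 j2 ∧ InIn n i1 j2 ∧ InIn n i2 j1

/-- The subtuple `𝐬(a,b)` (entries with indices `a+1, …, b`) lies in `S_→`. -/
def SRight (ii jj : ℕ → ℤ) (a b : ℕ) : Prop :=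
  ∀ s, a + 1 ≤ s → s + 1 ≤ b → ii s < ii (s + 1) ∧ jj s < jj (s + 1)

/-- The subtuple `𝐬(a,b)` (entries with indices `a+1, …, b`) lies in `S_←`. -/
def SLeft (ii jj : ℕ → ℤ) (a b : ℕ) : Prop :=
  ∀ s, a + 1 ≤ s → s + 1 ≤ b → ii (s + 1) < ii s ∧ jj (s + 1) < jj s

/-- `(𝐬, r(𝐬))` is an alternating snake, where `𝐬 = ([i_1,j_1],…,[i_r,j_r])`
(encoded by `ii jj : ℕ → ℤ`, entries indexed `1,…,r`) and
`r(𝐬) = (r_0, r_1, …, r_k)` (encoded by `rr : ℕ → ℕ`). -/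
structure IsAltSnake (n r k : ℕ) (rr : ℕ → ℕ) (ii jj : ℕ → ℤ) : Prop where
  hr : 1 ≤ r
  hk : k ≤ r
  mem : ∀ s, 1 ≤ s → s ≤ r → InIn n (ii s) (jj s)
  distinct : ∀ s p, 1 ≤ s → s ≤ r → 1 ≤ p → p ≤ r → s ≠ p → ii s ≠ ii p ∨ jj s ≠ jj p
  rr0 : rr 0 = 1
  rrk : rr k = r
  rrmono : ∀ m, m < k → rr m < rr (m + 1)
  mono : ∀ m, 1 ≤ m → m ≤ k →
      SRight ii jj (rr (m - 1) - 1) (rr m) ∨ SLeft ii jj (rr (m - 1) - 1) (rr m)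
  alt : ∀ m, 1 ≤ m → m < k →
      (SRight ii jj (rr (m - 1) - 1) (rr m) ↔ SLeft ii jj (rr m - 1) (rr (m + 1)))
  nonoverlap : ∀ m s t, 1 ≤ m → m < k → 1 ≤ s → s < rr m → rr m < t → t ≤ r →
      ¬ Overlap (ii s) (jj s) (ii t) (jj t)

/-- The subtuple `𝐬(a,b)` is connected: all consecutive pairs are connected. -/
def SegConnected (n : ℕ) (ii jj : ℕ → ℤ) (a b : ℕ) : Prop :=
  ∀ s, a + 1 ≤ s → s + 1 ≤ b → ConnPair n (ii s) (jj s) (ii (s + 1)) (jj (s + 1))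

/-- The subtuple `𝐬(a,b)` (with its induced r-vector, whose internal break points
are the `rr m` with `a + 1 < rr m < b`) is prime. -/
def SegPrime (n k : ℕ) (rr : ℕ → ℕ) (ii jj : ℕ → ℤ) (a b : ℕ) : Prop :=
  SegConnected n ii jj a b ∧
    ∀ m, 1 ≤ m → m < k → a + 1 < rr m → rr m < b →
      ii (rr m - 1) ≠ ii (rr m + 1) ∧ jj (rr m - 1) ≠ jj (rr m + 1)

/-- The subtuple `𝐬(a,b)` (with its induced r-vector) is stable. -/
def SegStable (k : ℕ) (rr : ℕ → ℕ) (ii jj : ℕ → ℤ) (a b : ℕ) : Prop :=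
  ∀ m, 1 ≤ m → m < k → a + 1 < rr m → rr m < b →
    (ii (rr m + 1) < ii (rr m - 1) → jj (rr m + 1) < ii (rr m - 1)) ∧
    (jj (rr m - 1) < jj (rr m + 1) → jj (rr m - 1) < ii (rr m + 1))

/-- The alternating snake is stable. -/
def Stable (k : ℕ) (rr : ℕ → ℕ) (ii jj : ℕ → ℤ) : Prop :=
  ∀ m, 1 ≤ m → m < k →
    (ii (rr m + 1) < ii (rr m - 1) → jj (rr m + 1) < ii (rr m - 1)) ∧
    (jj (rr m - 1) < jj (rr m + 1) → jj (rr m - 1) < ii (rr m + 1))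

/-- The boundary condition allowing a cut of the snake at `p = rr m - ε`:
`a_{r_m-1} = a_{r_m+1}` for some `a ∈ {i, j}`, with `ε ∈ {0,1}` chosen so that, `b`
denoting the other member of `{i,j}`, one has `b_{r_m−1+2ε} < b_{r_m+1−2ε}` if
`𝐬(r_m−2, r_m) ∈ S_←` and `b_{r_m+1−2ε} < b_{r_m−1+2ε}` if `𝐬(r_m−2, r_m) ∈ S_→`. -/
def BoundaryCond (k : ℕ) (rr : ℕ → ℕ) (ii jj : ℕ → ℤ) (m ε : ℕ) : Prop :=
  (ii (rr m - 1) = ii (rr m + 1) ∧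
    (SLeft ii jj (rr m - 2) (rr m) → jj (rr m - 1 + 2 * ε) < jj (rr m + 1 - 2 * ε)) ∧
    (SRight ii jj (rr m - 2) (rr m) → jj (rr m + 1 - 2 * ε) < jj (rr m - 1 + 2 * ε))) ∨
  (jj (rr m - 1) = jj (rr m + 1) ∧
    (SLeft ii jj (rr m - 2) (rr m) → ii (rr m - 1 + 2 * ε) < ii (rr m + 1 - 2 * ε)) ∧
    (SRight ii jj (rr m - 2) (rr m) → ii (rr m + 1 - 2 * ε) < ii (rr m - 1 + 2 * ε)))

/-- `p` is an admissible cut point for the prime decomposition. -/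
def CutAt (n r k : ℕ) (rr : ℕ → ℕ) (ii jj : ℕ → ℤ) (p : ℕ) : Prop :=
  p = r ∨
  ¬ ConnPair n (ii p) (jj p) (ii (p + 1)) (jj (p + 1)) ∨
  ∃ m ε, 1 ≤ m ∧ m < k ∧ ε ≤ 1 ∧ p = rr m - ε ∧ BoundaryCond k rr ii jj m ε

/-- `0 = c 0 < c 1 < ⋯ < c L = r` are the cut points of a prime decomposition
of the snake, the prime factors being the segments `𝐬(c t, c (t+1))`. -/
def IsPrimeDecomp (n r k : ℕ) (rr : ℕ → ℕ) (ii jj : ℕ → ℤ) (c : ℕ → ℕ) (L : ℕ) : Prop :=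
  1 ≤ L ∧ c 0 = 0 ∧ c L = r ∧ (∀ t, t < L → c t < c (t + 1)) ∧
  (∀ t, t < L → SegPrime n k rr ii jj (c t) (c (t + 1))) ∧
  (∀ t, 1 ≤ t → t ≤ L → CutAt n r k rr ii jj (c t))

/-- The segment `𝐬(a,b)` is contained in a prime factor of `𝐬`. -/
def ContainedInPF (n r k : ℕ) (rr : ℕ → ℕ) (ii jj : ℕ → ℤ) (a b : ℕ) : Prop :=
  ∃ c L t, IsPrimeDecomp n r k rr ii jj c L ∧ t < L ∧ c t ≤ a ∧ b ≤ c (t + 1)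


/-- Proposition (structure1 (iv)): a connected alternating snake with
`r(𝐬) = (1, r_1, r_2)` is stable iff `i_{r_1−1} ≤ i_{r_1+1} < j_{r_1+1} ≤ j_{r_1−1}`;
and in that case `i_{r_1−1} ≤ i_s ≤ j_s ≤ j_{r_1−1}` for all `r_1 + 1 ≤ s ≤ r_2`. -/
theorem stmt_10 (n r : ℕ) (hn : 1 ≤ n) (rr : ℕ → ℕ) (ii jj : ℕ → ℤ)
    (h : IsAltSnake n r 2 rr ii jj) (hc : SegConnected n ii jj 0 r) :
    (Stable 2 rr ii jj ↔
      (ii (rr 1 - 1) ≤ ii (rr 1 + 1) ∧ ii (rr 1 + 1) < jj (rr 1 + 1) ∧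
        jj (rr 1 + 1) ≤ jj (rr 1 - 1))) ∧
    (Stable 2 rr ii jj →
      ∀ s, rr 1 + 1 ≤ s → s ≤ rr 2 →
        ii (rr 1 - 1) ≤ ii s ∧ ii s ≤ jj s ∧ jj s ≤ jj (rr 1 - 1)) := by
  obtain ⟨hr, hk, mem, distinct, rr0, rrk, rrmono, mono, alt, nonoverlap⟩ := h
  have h01 : rr 0 < rr 1 := rrmono 0 (by norm_num)
  have h12 : rr 1 < rr 2 := rrmono 1 (by norm_num)
  have hr1ge2 : 2 ≤ rr 1 := by omega
  have hr1r : rr 1 + 1 ≤ r := by omega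
  have ov : ∀ s, 1 ≤ s → s + 1 ≤ r → Overlap (ii s) (jj s) (ii (s+1)) (jj (s+1)) :=
    fun s h1 h2 => (hc s (by omega) h2).1
  have hlt : ∀ s, 1 ≤ s → s ≤ r → ii s < jj s := by
    intro s h1 h2
    rcases Nat.lt_or_ge s r with h3 | h3
    · have := ov s h1 (by omega)
      rcases this with ⟨a,b,c⟩|⟨a,b,c⟩ <;> omega
    · have hsr : s = r := by omega
      have h2r : 2 ≤ r := by omega
      have hov := ov (r-1) (by omega) (by omega)
      have e : r - 1 + 1 = r := by omega
      rw [e] at hov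
      subst hsr
      rcases hov with ⟨a,b,c⟩|⟨a,b,c⟩ <;> omega
  have hjunc : (ii (rr 1 - 1) < ii (rr 1) ∧ jj (rr 1 - 1) < jj (rr 1) ∧
        ii (rr 1 + 1) < ii (rr 1) ∧ jj (rr 1 + 1) < jj (rr 1)) ∨
      (ii (rr 1) < ii (rr 1 - 1) ∧ jj (rr 1) < jj (rr 1 - 1) ∧
        ii (rr 1) < ii (rr 1 + 1) ∧ jj (rr 1) < jj (rr 1 + 1)) := by
    have hm1 := mono 1 (by norm_num) (by norm_num)
    have hm2 := mono 2 (by norm_num) (by norm_num)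
    have ha := alt 1 (by norm_num) (by norm_num)
    simp only [show (1:ℕ)-1 = 0 from rfl, show (2:ℕ)-1 = 1 from rfl, show (1:ℕ)+1 = 2 from rfl, rr0] at hm1 hm2 ha
    have e : rr 1 - 1 + 1 = rr 1 := by omega
    rcases hm1 with hR | hL
    · have hL2 := ha.mp hR
      have a1 := hR (rr 1 - 1) (by omega) (by omega)
      rw [e] at a1
      have a2 := hL2 (rr 1) (by omega) (by omega)
      exact Or.inl ⟨a1.1, a1.2, a2.1, a2.2⟩
    · have hR2 : SRight ii jj (rr 1 - 1) (rr 2) := by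
        rcases hm2 with h' | h'
        · exact h'
        · exfalso
          have b1 := ha.mpr h' 1 (by omega) (by omega)
          have b2 := hL 1 (by omega) (by omega)
          omega
      have a1 := hL (rr 1 - 1) (by omega) (by omega)
      rw [e] at a1
      have a2 := hR2 (rr 1) (by omega) (by omega)
      exact Or.inr ⟨a1.1, a1.2, a2.1, a2.2⟩
  have key : Stable 2 rr ii jj →
      ii (rr 1 - 1) ≤ ii (rr 1 + 1) ∧ jj (rr 1 + 1) ≤ jj (rr 1 - 1) := by
    intro hst
    have hs1 := hst 1 (by norm_num) (by norm_num)
    have ov1 := ov (rr 1 - 1) (by omega) (by omega)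
    have e : rr 1 - 1 + 1 = rr 1 := by omega
    rw [e] at ov1
    have ov2 := ov (rr 1) (by omega) (by omega)
    constructor
    · by_contra h'
      rw [not_le] at h'
      have h'' := hs1.1 h'
      rcases hjunc with hj | hj <;> rcases ov1 with o1 | o1 <;> rcases ov2 with o2 | o2 <;> omega
    · by_contra h'
      rw [not_le] at h'
      have h'' := hs1.2 h'
      rcases hjunc with hj | hj <;> rcases ov1 with o1 | o1 <;> rcases ov2 with o2 | o2 <;> omega
  have hcontain : Stable 2 rr ii jj → ∀ s, rr 1 + 1 ≤ s → s ≤ r →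
      ii (rr 1 - 1) ≤ ii s ∧ ii s ≤ jj s ∧ jj s ≤ jj (rr 1 - 1) := by
    intro hst s
    induction s with
    | zero => intro h1 h2; exact absurd h1 (by omega)
    | succ t ih =>
      intro h1 h2
      rcases Nat.lt_or_ge t (rr 1 + 1) with hb | hb
      · have ht1 : t = rr 1 := by omega
        subst ht1
        exact ⟨(key hst).1, le_of_lt (hlt _ (by omega) h2), (key hst).2⟩
      · have ht := ih (by omega) (by omega)
        have hov := ov t (by omega) (by omega)
        have hno := nonoverlap 1 (rr 1 - 1) (t+1) (by norm_num) (by norm_num)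
          (by omega) (by omega) (by omega) h2
        unfold Overlap at hov hno
        refine ⟨?_, ?_, ?_⟩ <;> omega
  constructor
  · constructor
    · intro hst
      exact ⟨(key hst).1, hlt _ (by omega) (by omega), (key hst).2⟩
    · rintro ⟨h1, h2, h3⟩ m hm1 hm2
      have hm : m = 1 := by omega
      subst hm
      exact ⟨fun h' => absurd h' (by omega), fun h' => absurd h' (by omega)⟩
  · intro hst s hs1 hs2
    rw [rrk] at hs2
    exact hcontain hst s hs1 hs2

end AltSnakePaper
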